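/- Let S be a convex set of d×d real symmetric positive semidefinite matrices and let Φ be a real-valued function on the positive semidefinite matrices that is concave, strictly isotonic on PD(d) (Φ(M₁) > Φ(M₂) whenever M₁ ≥ M₂ > 0 in the Loewner order and M₁ ≠ M₂), and strictly concave on PD(d) (Φ(αM₁ + (1−α)M₂) > αΦ(M₁) + (1−α)Φ(M₂) for every α ∈ (0,1), M₁ positive definite, M₂ positive semidefinite with M₂ not a scalar multiple of M₁). If M* ∈ S and M̃ ∈ S both maximize Φ over S and M* is positive definite, then M̃ = M*. -/

import Mathlib

open Matrix

lemma smul_psd {d : ℕ} {M : Matrix (Fin d) (Fin d) ℝ} (hM : M.PosSemidef) {c : ℝ}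
    (hc : 0 ≤ c) : (c • M).PosSemidef := by
  refine posSemidef_iff_dotProduct_mulVec.mpr ⟨by unfold Matrix.IsHermitian; rw [conjTranspose_smul, hM.1]; simp, fun x => ?_⟩
  rw [smul_mulVec, dotProduct_smul, smul_eq_mul]
  exact mul_nonneg hc (hM.dotProduct_mulVec_nonneg x)

lemma smul_pd {d : ℕ} {M : Matrix (Fin d) (Fin d) ℝ} (hM : M.PosDef) {c : ℝ}
    (hc : 0 < c) : (c • M).PosDef := by
  refine posDef_iff_dotProduct_mulVec.mpr ⟨by unfold Matrix.IsHermitian; rw [conjTranspose_smul, hM.1]; simp, fun x hx => ?_⟩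
  rw [smul_mulVec, dotProduct_smul, smul_eq_mul]
  exact mul_pos hc (hM.dotProduct_mulVec_pos hx)

/-- two maximizers of a strictly isotonic, strictly concave criterion over a
convex set of positive semidefinite matrices coincide if one of them is positive definite. -/
theorem stmt3 {d : ℕ} (S : Set (Matrix (Fin d) (Fin d) ℝ))
    (hSpsd : ∀ A ∈ S, A.PosSemidef)
    (hSconv : ∀ A ∈ S, ∀ B ∈ S, ∀ α : ℝ, 0 ≤ α → α ≤ 1 → α • A + (1 - α) • B ∈ S)
    (Φ : Matrix (Fin d) (Fin d) ℝ → ℝ)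
    (hConcave : ∀ A B : Matrix (Fin d) (Fin d) ℝ, A.PosSemidef → B.PosSemidef →
      ∀ α : ℝ, 0 < α → α < 1 → α * Φ A + (1 - α) * Φ B ≤ Φ (α • A + (1 - α) • B))
    (hStrictIso : ∀ A B : Matrix (Fin d) (Fin d) ℝ, B.PosDef → (A - B).PosSemidef →
      A ≠ B → Φ B < Φ A)
    (hStrictConc : ∀ A B : Matrix (Fin d) (Fin d) ℝ, A.PosDef → B.PosSemidef →
      (∀ t : ℝ, B ≠ t • A) → ∀ α : ℝ, 0 < α → α < 1 →
      α * Φ A + (1 - α) * Φ B < Φ (α • A + (1 - α) • B))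
    (Mstar Mtil : Matrix (Fin d) (Fin d) ℝ)
    (hMstarS : Mstar ∈ S) (hMtilS : Mtil ∈ S)
    (hMstarPD : Mstar.PosDef)
    (hMstarMax : ∀ A ∈ S, Φ A ≤ Φ Mstar)
    (hMtilMax : ∀ A ∈ S, Φ A ≤ Φ Mtil) :
    Mtil = Mstar := by
  rcases Nat.eq_zero_or_pos d with hd | hd
  · ext i j; exact absurd i.isLt (by omega)
  have hEq : Φ Mtil = Φ Mstar := le_antisymm (hMstarMax _ hMtilS) (hMtilMax _ hMstarS)
  by_contra hne
  by_cases hscal : ∀ t : ℝ, Mtil ≠ t • Mstar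
  · have hmem := hSconv Mstar hMstarS Mtil hMtilS (1/2) (by norm_num) (by norm_num)
    have h1 := hStrictConc Mstar Mtil hMstarPD (hSpsd _ hMtilS) hscal (1/2)
      (by norm_num) (by norm_num)
    have hle := hMstarMax _ hmem
    rw [hEq] at h1
    linarith
  · push_neg at hscal
    obtain ⟨t, ht⟩ := hscal
    -- t ≥ 0
    have hx : (fun _ : Fin d => (1:ℝ)) ≠ 0 := by
      intro h
      have := congrFun h ⟨0, hd⟩
      simp at this
    have hq : 0 < dotProduct (star (fun _ : Fin d => (1:ℝ))) (Mstar *ᵥ fun _ => 1) :=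
      hMstarPD.dotProduct_mulVec_pos hx
    have hq2 : 0 ≤ t * dotProduct (star (fun _ : Fin d => (1:ℝ))) (Mstar *ᵥ fun _ => 1) := by
      have := (hSpsd _ hMtilS).dotProduct_mulVec_nonneg (fun _ => 1)
      rw [ht, smul_mulVec, dotProduct_smul, smul_eq_mul] at this
      exact this
    have htnn : 0 ≤ t := nonneg_of_mul_nonneg_right (by linarith [hq2] : 0 ≤ ((star fun _ : Fin d => (1:ℝ)) ⬝ᵥ Mstar *ᵥ fun _ => 1) * t) hq
    have ht1 : t ≠ 1 := by
      intro h; rw [h, one_smul] at ht; exact hne ht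
    rcases lt_or_gt_of_ne ht1 with hlt | hgt
    · rcases eq_or_lt_of_le htnn with h0 | hpos
      · -- t = 0, Mtil = 0
        have hmem := hSconv Mstar hMstarS Mtil hMtilS (1/2) (by norm_num) (by norm_num)
        have hcc := hConcave Mstar Mtil hMstarPD.posSemidef (hSpsd _ hMtilS) (1/2)
          (by norm_num) (by norm_num)
        have hM0 : Mtil = 0 := by rw [ht, ← h0, zero_smul]
        have hhalf : (1/2 : ℝ) • Mstar + (1 - 1/2 : ℝ) • Mtil = (1/2 : ℝ) • Mstar := by
          rw [hM0]; simp
        have hpd2 : ((1/2 : ℝ) • Mstar).PosDef := smul_pd hMstarPD (by norm_num)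
        have hsub : (Mstar - (1/2 : ℝ) • Mstar).PosSemidef := by
          have : Mstar - (1/2 : ℝ) • Mstar = (1/2 : ℝ) • Mstar := by module
          rw [this]; exact hpd2.posSemidef
        have hneq : Mstar ≠ (1/2 : ℝ) • Mstar := by
          intro h
          have : Mstar = 0 := by
            have := sub_eq_zero.mpr h
            have h2 : (1/2 : ℝ) • Mstar = 0 := by
              rw [← this]; module
            simpa using (smul_eq_zero.mp h2).resolve_left (by norm_num)
          rw [hM0, this] at hne; exact hne rfl
        have hiso := hStrictIso Mstar ((1/2 : ℝ) • Mstar) hpd2 hsub hneq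
        rw [hhalf] at hcc
        linarith
      · -- 0 < t < 1
        have hpd : Mtil.PosDef := by rw [ht]; exact smul_pd hMstarPD hpos
        have hsub : (Mstar - Mtil).PosSemidef := by
          have : Mstar - Mtil = (1 - t) • Mstar := by rw [ht]; module
          rw [this]; exact smul_psd hMstarPD.posSemidef (by linarith)
        have := hStrictIso Mstar Mtil hpd hsub (fun h => hne h.symm)
        linarith
    · -- t > 1
      have hsub : (Mtil - Mstar).PosSemidef := by
        have : Mtil - Mstar = (t - 1) • Mstar := by rw [ht]; module
        rw [this]; exact smul_psd hMstarPD.posSemidef (by linarith)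
      have := hStrictIso Mtil Mstar hMstarPD hsub hne
      linarith
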